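/- arXiv:1612.04465 — 5 statements merged into one kernel-verified Lean document; each statement's English description precedes it below -/
import Mathlib

section
/- For a b-subset s of {1,...,b+c} and its complement s̄ (a c-subset), with extensions by the top block {b+c+1,...,b+c+a}, one has dim V_{s̄,a+b} · dim V_{s,a+c} = |PP(a,b,c)| · dim V_{s̄,b} · dim V_{s,c}, i.e. the explicit Vandermonde identity Δ(s,\,b+c+1,...,b+c+a)·Δ(s̄,\,b+c+1,...,b+c+a) / (Δ(1,...,a+b)·Δ(1,...,a+c)) = |PP(a,b,c)| · Δ(s)Δ(s̄)/(Δ(1,...,b)Δ(1,...,c)). -/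
/-- The Vandermonde product `Δ(S) = ∏_{i<j, i,j ∈ S} (j - i)` of a finite set of
natural numbers. -/
def vdm (S : Finset ℕ) : ℚ :=
  ∏ p ∈ S.offDiag.filter (fun p => p.1 < p.2), ((p.2 : ℚ) - (p.1 : ℚ))

/-- The MacMahon box-counting formula for `|PP(a,b,c)|`. -/
def macmahon (a b c : ℕ) : ℚ :=
  ∏ i ∈ Finset.range a, ∏ j ∈ Finset.range b, ∏ k ∈ Finset.range c,
    ((i + j + k + 2 : ℚ) / (i + j + k + 1 : ℚ))

lemma vdm_ne_zero (S : Finset ℕ) : vdm S ≠ 0 := by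
  apply Finset.prod_ne_zero_iff.2
  intro p hp
  simp only [Finset.mem_filter] at hp
  have : (p.1 : ℚ) < p.2 := by exact_mod_cast hp.2
  exact sub_ne_zero.2 (ne_of_gt this)

lemma vdm_union (S T : Finset ℕ) (h : ∀ x ∈ S, ∀ y ∈ T, x < y) :
    vdm (S ∪ T) = vdm S * vdm T * ∏ x ∈ S, ∏ y ∈ T, ((y : ℚ) - x) := by
  have hset : (S ∪ T).offDiag.filter (fun p => p.1 < p.2)
      = ((S.offDiag.filter (fun p => p.1 < p.2)) ∪
          (T.offDiag.filter (fun p => p.1 < p.2))) ∪ S ×ˢ T := by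
    ext p
    simp only [Finset.mem_filter, Finset.mem_offDiag, Finset.mem_union, Finset.mem_product]
    constructor
    · rintro ⟨⟨h1, h2, hne⟩, hlt⟩
      rcases h1 with h1 | h1 <;> rcases h2 with h2 | h2
      · exact Or.inl (Or.inl ⟨⟨h1, h2, hne⟩, hlt⟩)
      · exact Or.inr ⟨h1, h2⟩
      · exact absurd (h _ h2 _ h1) (by omega)
      · exact Or.inl (Or.inr ⟨⟨h1, h2, hne⟩, hlt⟩)
    · rintro ((⟨⟨h1, h2, hne⟩, hlt⟩ | ⟨⟨h1, h2, hne⟩, hlt⟩) | ⟨h1, h2⟩)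
      · exact ⟨⟨Or.inl h1, Or.inl h2, hne⟩, hlt⟩
      · exact ⟨⟨Or.inr h1, Or.inr h2, hne⟩, hlt⟩
      · have := h _ h1 _ h2
        exact ⟨⟨Or.inl h1, Or.inr h2, by omega⟩, this⟩
  have hd1 : Disjoint (S.offDiag.filter (fun p => p.1 < p.2))
      (T.offDiag.filter (fun p => p.1 < p.2)) := by
    rw [Finset.disjoint_left]
    rintro p hp hq
    simp only [Finset.mem_filter, Finset.mem_offDiag] at hp hq
    have := h _ hp.1.1 _ hq.1.1
    omega
  have hd2 : Disjoint ((S.offDiag.filter (fun p => p.1 < p.2)) ∪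
      (T.offDiag.filter (fun p => p.1 < p.2))) (S ×ˢ T) := by
    rw [Finset.disjoint_left]
    rintro p hp hq
    simp only [Finset.mem_filter, Finset.mem_offDiag, Finset.mem_union,
      Finset.mem_product] at hp hq
    rcases hp with ⟨⟨h1, h2, _⟩, _⟩ | ⟨⟨h1, h2, _⟩, _⟩
    · have := h _ h2 _ hq.2; omega
    · have := h _ hq.1 _ h1; omega
  rw [vdm, hset, Finset.prod_union hd2, Finset.prod_union hd1, Finset.prod_product]
  rfl

lemma prod_desc (n k : ℕ) :
    ∏ x ∈ Finset.Icc 1 n, ((n : ℚ) + k + 1 - x) = ((n + k).factorial : ℚ) / (k.factorial : ℚ) := by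
  induction n generalizing k with
  | zero => simp [div_self (show ((k.factorial : ℚ)) ≠ 0 by exact_mod_cast k.factorial_ne_zero)]
  | succ n ih =>
    rw [Finset.prod_Icc_succ_top (by omega)]
    have h2 : ∏ x ∈ Finset.Icc 1 n, ((↑(n+1) : ℚ) + k + 1 - x)
        = ∏ x ∈ Finset.Icc 1 n, ((n : ℚ) + ((k+1 : ℕ) : ℚ) + 1 - x) := by
      apply Finset.prod_congr rfl; intro x hx; push_cast; ring
    rw [h2, ih (k+1)]
    have hne : (k.factorial : ℚ) ≠ 0 := by exact_mod_cast k.factorial_ne_zero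
    have hne2 : ((k+1).factorial : ℚ) ≠ 0 := by exact_mod_cast (k+1).factorial_ne_zero
    have hfac : ((n + (k+1)).factorial : ℚ) = ((n + 1 + k).factorial : ℚ) := by
      norm_cast; congr 1; omega
    have hfac2 : ((n + 1 + k).factorial : ℚ) * (k+1) = ((k+1).factorial : ℚ) / (k.factorial) * ((n+1+k).factorial) := by
      rw [Nat.factorial_succ]
      push_cast
      field_simp
    rw [hfac]
    have : ((↑(n+1) : ℚ) + k + 1 - ↑(n+1)) = (k + 1 : ℚ) := by push_cast; ring
    rw [this]
    rw [div_mul_eq_mul_div, hfac2]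
    field_simp

lemma prod_asc (m b : ℕ) :
    ∏ j ∈ Finset.range b, ((m : ℚ) + j + 1) = ((m + b).factorial : ℚ) / (m.factorial : ℚ) := by
  induction b with
  | zero => simp [div_self (show ((m.factorial : ℚ)) ≠ 0 by exact_mod_cast m.factorial_ne_zero)]
  | succ b ih =>
    rw [Finset.prod_range_succ, ih]
    have h1 : ((m + (b+1)).factorial : ℚ) = ((m + b).factorial : ℚ) * (m + b + 1 : ℚ) := by
      have : m + (b+1) = (m+b) + 1 := by omega
      rw [this, Nat.factorial_succ]; push_cast; ring
    rw [h1]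
    field_simp

lemma telescope (f : ℕ → ℚ) (hf : ∀ k, f k ≠ 0) (n : ℕ) :
    ∏ k ∈ Finset.range n, (f (k+1) / f k) = f n / f 0 := by
  induction n with
  | zero => simp [div_self (hf 0)]
  | succ n ih =>
    rw [Finset.prod_range_succ, ih, div_mul_div_comm, mul_comm (f n) (f (n+1))]
    exact mul_div_mul_right _ _ (hf n)

lemma vdm_Icc_succ (n : ℕ) :
    vdm (Finset.Icc 1 (n + 1)) = vdm (Finset.Icc 1 n) * (n.factorial : ℚ) := by
  have hU : Finset.Icc 1 (n+1) = Finset.Icc 1 n ∪ {n+1} := by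
    ext x; simp [Finset.mem_Icc]; omega
  rw [hU, vdm_union _ _ (by intro x hx y hy; simp at hx hy; omega)]
  have h1 : vdm ({n+1} : Finset ℕ) = 1 := by simp [vdm]
  have h2 : ∏ x ∈ Finset.Icc 1 n, ∏ y ∈ ({n+1} : Finset ℕ), ((y:ℚ) - x)
      = ∏ x ∈ Finset.Icc 1 n, ((n:ℚ) + ((0:ℕ):ℚ) + 1 - x) := by
    apply Finset.prod_congr rfl; intro x hx
    rw [Finset.prod_singleton]; push_cast; ring
  rw [h1, h2, prod_desc n 0]
  simp

lemma vdm_shift_succ (m a : ℕ) :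
    vdm (Finset.Icc (m + 1) (m + (a + 1))) = vdm (Finset.Icc (m + 1) (m + a)) * (a.factorial : ℚ) := by
  have hU : Finset.Icc (m+1) (m+(a+1)) = Finset.Icc (m+1) (m+a) ∪ {m+a+1} := by
    ext x; simp [Finset.mem_Icc]; omega
  rw [hU, vdm_union _ _ (by intro x hx y hy; simp [Finset.mem_Icc] at hx hy; omega)]
  have h1 : vdm ({m+a+1} : Finset ℕ) = 1 := by simp [vdm]
  have h2 : ∏ x ∈ Finset.Icc (m+1) (m+a), ∏ y ∈ ({m+a+1} : Finset ℕ), ((y:ℚ) - x)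
      = ∏ x ∈ Finset.Icc 1 a, ((a:ℚ) + ((0:ℕ):ℚ) + 1 - x) := by
    have hmap : Finset.Icc (m+1) (m+a) = (Finset.Icc 1 a).map (addLeftEmbedding m) := by
      rw [Finset.map_add_left_Icc]
    rw [hmap, Finset.prod_map]
    apply Finset.prod_congr rfl
    intro x hx
    rw [Finset.prod_singleton]
    simp only [addLeftEmbedding_apply]
    push_cast
    ring
  rw [h1, h2, prod_desc a 0]
  simp

lemma mac_step (a b c : ℕ) :
    (∏ j ∈ Finset.range b, ∏ k ∈ Finset.range c,
        (((a:ℚ) + j + k + 2) / ((a:ℚ) + j + k + 1)))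
      = (((a+b+c).factorial : ℚ) / ((a+c).factorial : ℚ)) /
        (((a+b).factorial : ℚ) / (a.factorial : ℚ)) := by
  have hinner : ∀ j : ℕ, (∏ k ∈ Finset.range c, (((a:ℚ) + j + k + 2) / ((a:ℚ) + j + k + 1)))
      = ((a:ℚ) + c + j + 1) / ((a:ℚ) + j + 1) := by
    intro j
    have hf : ∀ k : ℕ, ((a:ℚ) + j + k + 1) ≠ 0 := by
      intro k; positivity
    have h0 : (∏ k ∈ Finset.range c, (((a:ℚ) + j + k + 2) / ((a:ℚ) + j + k + 1)))
        = ∏ k ∈ Finset.range c,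
            ((fun k : ℕ => ((a:ℚ) + j + k + 1)) (k+1) / (fun k : ℕ => ((a:ℚ) + j + k + 1)) k) := by
      apply Finset.prod_congr rfl
      intro k hk
      push_cast
      ring_nf
    rw [h0, telescope _ hf c]
    push_cast
    ring
  rw [Finset.prod_congr rfl (fun j _ => hinner j), Finset.prod_div_distrib]
  have h1 : ∏ j ∈ Finset.range b, ((a:ℚ) + c + j + 1)
      = ∏ j ∈ Finset.range b, (((a+c : ℕ):ℚ) + j + 1) := by
    apply Finset.prod_congr rfl; intro j _; push_cast; ring
  have h2 : ∏ j ∈ Finset.range b, ((a:ℚ) + j + 1)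
      = ∏ j ∈ Finset.range b, (((a : ℕ):ℚ) + j + 1) := rfl
  rw [h1, h2, prod_asc (a+c) b, prod_asc a b]
  have : a + c + b = a + b + c := by omega
  rw [this]

lemma key (a b c : ℕ) :
    vdm (Finset.Icc (b+c+1) (b+c+a)) ^ 2 *
      (∏ y ∈ Finset.Icc (b+c+1) (b+c+a), ∏ x ∈ Finset.Icc 1 (b+c), ((y:ℚ) - x)) *
      (vdm (Finset.Icc 1 b) * vdm (Finset.Icc 1 c))
    = macmahon a b c * (vdm (Finset.Icc 1 (a+b)) * vdm (Finset.Icc 1 (a+c))) := by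
  induction a with
  | zero =>
    have he : Finset.Icc (b+c+1) (b+c+0) = (∅ : Finset ℕ) := by
      apply Finset.Icc_eq_empty; omega
    simp [he, vdm, macmahon]
  | succ a ih =>
    have hT := vdm_shift_succ (b+c) a
    have hab : a + 1 + b = (a + b) + 1 := by omega
    have hac : a + 1 + c = (a + c) + 1 := by omega
    have hQ : (∏ y ∈ Finset.Icc (b+c+1) (b+c+(a+1)), ∏ x ∈ Finset.Icc 1 (b+c), ((y:ℚ) - x))
        = (∏ y ∈ Finset.Icc (b+c+1) (b+c+a), ∏ x ∈ Finset.Icc 1 (b+c), ((y:ℚ) - x)) *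
          (((b+c+a).factorial : ℚ) / (a.factorial : ℚ)) := by
      have h0 : b+c+(a+1) = (b+c+a)+1 := by omega
      rw [h0, Finset.prod_Icc_succ_top (by omega)]
      congr 1
      have : (∏ x ∈ Finset.Icc 1 (b+c), ((↑(b+c+a+1) : ℚ) - x))
          = ∏ x ∈ Finset.Icc 1 (b+c), (((b+c : ℕ):ℚ) + (a:ℚ) + 1 - x) := by
        apply Finset.prod_congr rfl; intro x _; push_cast; ring
      rw [this, prod_desc (b+c) a]
    have hM : macmahon (a+1) b c = macmahon a b c *
        ((((a+b+c).factorial : ℚ) / ((a+c).factorial : ℚ)) /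
          (((a+b).factorial : ℚ) / (a.factorial : ℚ))) := by
      rw [macmahon, Finset.prod_range_succ, ← macmahon, ← mac_step a b c]
    rw [hT, hQ, hM, hab, hac, vdm_Icc_succ (a+b), vdm_Icc_succ (a+c)]
    have hfa : ((a.factorial : ℚ)) ≠ 0 := by exact_mod_cast a.factorial_ne_zero
    have hfab : (((a+b).factorial : ℚ)) ≠ 0 := by exact_mod_cast (a+b).factorial_ne_zero
    have hfac : (((a+c).factorial : ℚ)) ≠ 0 := by exact_mod_cast (a+c).factorial_ne_zero
    have habc : (b+c+a).factorial = (a+b+c).factorial := by congr 1; omega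
    rw [habc]
    field_simp
    linear_combination ih

/-- for a `b`-subset `s` of `{1,…,b+c}` with complement `s̄`, extending
both by the top block `T = {b+c+1,…,b+c+a}`, one has the Vandermonde identity
`Δ(s ∪ T)·Δ(s̄ ∪ T)/(Δ(1,…,a+b)·Δ(1,…,a+c)) = |PP(a,b,c)|·Δ(s)·Δ(s̄)/(Δ(1,…,b)·Δ(1,…,c))`,
i.e. `dim V_{s̄,a+b} · dim V_{s,a+c} = |PP(a,b,c)| · dim V_{s̄,b} · dim V_{s,c}`. -/
theorem vandermonde_dim_ratio (a b c : ℕ) (s : Finset ℕ)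
    (hs : s ⊆ Finset.Icc 1 (b + c)) (hcard : s.card = b) :
    vdm (s ∪ Finset.Icc (b + c + 1) (b + c + a)) *
        vdm ((Finset.Icc 1 (b + c) \ s) ∪ Finset.Icc (b + c + 1) (b + c + a)) /
        (vdm (Finset.Icc 1 (a + b)) * vdm (Finset.Icc 1 (a + c)))
      = macmahon a b c *
        (vdm s * vdm (Finset.Icc 1 (b + c) \ s) /
          (vdm (Finset.Icc 1 b) * vdm (Finset.Icc 1 c))) := by
  set T := Finset.Icc (b + c + 1) (b + c + a) with hTdef
  have hlt : ∀ S : Finset ℕ, S ⊆ Finset.Icc 1 (b+c) → ∀ x ∈ S, ∀ y ∈ T, x < y := by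
    intro S hS x hx y hy
    have h1 := hS hx
    rw [Finset.mem_Icc] at h1
    rw [hTdef, Finset.mem_Icc] at hy
    omega
  have h1 := vdm_union s T (hlt s hs)
  have h2 := vdm_union (Finset.Icc 1 (b+c) \ s) T (hlt _ (Finset.sdiff_subset))
  have hsplit : (∏ x ∈ s, ∏ y ∈ T, ((y:ℚ) - x)) *
      (∏ x ∈ Finset.Icc 1 (b+c) \ s, ∏ y ∈ T, ((y:ℚ) - x))
      = ∏ y ∈ T, ∏ x ∈ Finset.Icc 1 (b+c), ((y:ℚ) - x) := by
    rw [mul_comm, Finset.prod_sdiff hs, Finset.prod_comm]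
  have hkey := key a b c
  have hb0 := vdm_ne_zero (Finset.Icc 1 b)
  have hc0 := vdm_ne_zero (Finset.Icc 1 c)
  have hab0 := vdm_ne_zero (Finset.Icc 1 (a+b))
  have hac0 := vdm_ne_zero (Finset.Icc 1 (a+c))
  rw [h1, h2]
  field_simp
  linear_combination (vdm s * vdm (Finset.Icc 1 (b+c) \ s)) * hkey +
    (vdm s * vdm (Finset.Icc 1 (b+c) \ s) * vdm T ^ 2 *
      vdm (Finset.Icc 1 b) * vdm (Finset.Icc 1 c)) * hsplit
end

section
/- Let s_+ = {s_{+,1} < ... < s_{+,b+1}} ⊆ {1,...,b+c} and fix i with 1 ≤ i ≤ b. Define for each h ∈ {1,...,b+1} the weight W(h) = (½ s_{+,h} − i + 3/2)² + Σ_{m=1}^{b} (½ (s_+ \\ s_{+,h})_m + 1 − m)², where (s_+ \\ s_{+,h})_m denotes the m-th smallest element of s_+ with s_{+,h} removed. Then W(h+1) − W(h) = (h − i + 1/2)(s_{+,h+1} − s_{+,h}), and consequently W has a unique minimum at h = i. -/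
/-- let `s_+ = {s_{+,1} < … < s_{+,b+1}}` (given by its strictly
increasing enumeration `s : Fin (b+1) → ℕ`, 0-indexed) and fix `i` with `1 ≤ i ≤ b`.
For `h ∈ {1,…,b+1}` (0-indexed `h : Fin (b+1)`), the weight is
`W(h) = (½ s_{+,h} − i + 3/2)² + ∑_{m=1}^{b} (½ (s_+ \ s_{+,h})_m + 1 − m)²`,
where `(s_+ \ s_{+,h})_m` is the `m`-th smallest element after removing `s_{+,h}`
(namely `s_{+,m}` for `m < h` and `s_{+,m+1}` for `m ≥ h`).  Then consecutive
differences satisfy `W(h+1) − W(h) = (h − i + 1/2)(s_{+,h+1} − s_{+,h})`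
(1-indexed `h`), and consequently `W` has a unique minimum at `h = i`
(0-indexed `i - 1`). -/
theorem weight_unique_minimum (b : ℕ) (s : Fin (b + 1) → ℕ) (hs : StrictMono s)
    (i : ℕ) (hi1 : 1 ≤ i) (hib : i ≤ b)
    (W : Fin (b + 1) → ℚ)
    (hW : ∀ h : Fin (b + 1), W h =
      ((s h : ℚ) / 2 - (i : ℚ) + 3 / 2) ^ 2 +
        ∑ m : Fin b,
          ((if (m : ℕ) < (h : ℕ) then (s m.castSucc : ℚ) else (s m.succ : ℚ)) / 2
            + 1 - ((m : ℕ) + 1 : ℚ)) ^ 2) :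
    (∀ h : Fin b, W h.succ - W h.castSucc
        = (((h : ℕ) : ℚ) + 1 - (i : ℚ) + 1 / 2) * ((s h.succ : ℚ) - (s h.castSucc : ℚ))) ∧
    (∀ h : Fin (b + 1), (h : ℕ) ≠ i - 1 → W ⟨i - 1, by omega⟩ < W h) := by
  have key : ∀ h : Fin b, W h.succ - W h.castSucc
      = (((h : ℕ) : ℚ) + 1 - (i : ℚ) + 1 / 2) * ((s h.succ : ℚ) - (s h.castSucc : ℚ)) := by
    intro h
    rw [hW, hW]
    have hsum :
        (∑ m : Fin b,
            ((if (m : ℕ) < (h.succ : ℕ) then (s m.castSucc : ℚ) else (s m.succ : ℚ)) / 2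
              + 1 - ((m : ℕ) + 1 : ℚ)) ^ 2)
          - (∑ m : Fin b,
            ((if (m : ℕ) < (h.castSucc : ℕ) then (s m.castSucc : ℚ) else (s m.succ : ℚ)) / 2
              + 1 - ((m : ℕ) + 1 : ℚ)) ^ 2)
        = ((s h.castSucc : ℚ) / 2 + 1 - ((h : ℕ) + 1 : ℚ)) ^ 2
            - ((s h.succ : ℚ) / 2 + 1 - ((h : ℕ) + 1 : ℚ)) ^ 2 := by
      rw [← Finset.sum_sub_distrib]
      rw [Finset.sum_eq_single h]
      · simp [Fin.val_succ, Fin.coe_castSucc, Nat.lt_succ_self]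
      · intro m _ hm
        have hmh : (m : ℕ) ≠ (h : ℕ) := fun e => hm (Fin.ext e)
        by_cases hlt : (m : ℕ) < (h : ℕ)
        · have h1 : (m : ℕ) < (h : ℕ) + 1 := by omega
          simp [hlt, h1, Fin.coe_castSucc, Fin.val_succ]
        · have h1 : ¬ (m : ℕ) < (h : ℕ) + 1 := by omega
          simp [hlt, h1, Fin.coe_castSucc, Fin.val_succ]
      · simp
    linear_combination hsum
  refine ⟨key, ?_⟩
  have Weq : ∀ (x y : ℕ) (hx : x ≤ b) (hy : y ≤ b), x = y → W ⟨x, by omega⟩ = W ⟨y, by omega⟩ := by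
    intro x y hx hy hxy
    subst hxy
    rfl
  have hstep : ∀ n : ℕ, (hn : n < b) →
      W ⟨n + 1, by omega⟩ - W ⟨n, by omega⟩
        = ((n : ℚ) + 1 - (i : ℚ) + 1 / 2) * ((s ⟨n + 1, by omega⟩ : ℚ) - (s ⟨n, by omega⟩ : ℚ)) := by
    intro n hn
    exact key ⟨n, hn⟩
  have hpos : ∀ n : ℕ, (hn : n < b) → (0 : ℚ) < (s ⟨n + 1, by omega⟩ : ℚ) - (s ⟨n, by omega⟩ : ℚ) := by
    intro n hn
    have : s ⟨n, by omega⟩ < s ⟨n + 1, by omega⟩ := hs (by simp [Fin.lt_def])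
    have := (Nat.cast_lt (α := ℚ)).2 this
    linarith
  have up : ∀ n : ℕ, (hn : n < b) → i - 1 ≤ n → W ⟨n, by omega⟩ < W ⟨n + 1, by omega⟩ := by
    intro n hn hni
    have h1 := hstep n hn
    have h2 := hpos n hn
    have hcoef : (0 : ℚ) < (n : ℚ) + 1 - (i : ℚ) + 1 / 2 := by
      have : (i : ℚ) ≤ (n : ℚ) + 1 := by exact_mod_cast Nat.le_of_lt_succ (by omega)
      linarith
    nlinarith
  have down : ∀ n : ℕ, (hn : n < b) → n < i - 1 → W ⟨n + 1, by omega⟩ < W ⟨n, by omega⟩ := by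
    intro n hn hni
    have h1 := hstep n hn
    have h2 := hpos n hn
    have hcoef : (n : ℚ) + 1 - (i : ℚ) + 1 / 2 < 0 := by
      have : (n : ℚ) + 2 ≤ (i : ℚ) := by exact_mod_cast (by omega : n + 2 ≤ i)
      linarith
    nlinarith
  have chainUp : ∀ k : ℕ, ∀ (hk : i - 1 + k + 1 ≤ b),
      W ⟨i - 1, by omega⟩ < W ⟨i - 1 + k + 1, by omega⟩ := by
    intro k
    induction k with
    | zero =>
      intro hk
      simpa using up (i - 1) (by omega) le_rfl
    | succ k ih =>
      intro hk
      have h1 := ih (by omega)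
      have h2 := up (i - 1 + k + 1) (by omega) (by omega)
      calc W ⟨i - 1, by omega⟩ < W ⟨i - 1 + k + 1, by omega⟩ := h1
        _ < W ⟨i - 1 + k + 1 + 1, by omega⟩ := h2
        _ = W ⟨i - 1 + (k + 1) + 1, by omega⟩ := Weq _ _ (by omega) (by omega) (by omega)
  have chainDown : ∀ k : ℕ, ∀ n : ℕ, (hn : n + k = i - 1) →
      W ⟨i - 1, by omega⟩ ≤ W ⟨n, by omega⟩ := by
    intro k
    induction k with
    | zero =>
      intro n hn
      exact le_of_eq (Weq _ _ (by omega) (by omega) (by omega))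
    | succ k ih =>
      intro n hn
      have h1 := ih (n + 1) (by omega)
      have h2 := down n (by omega) (by omega)
      exact le_of_lt (lt_of_le_of_lt h1 h2)
  intro h hne
  have heta : h = ⟨(h : ℕ), h.isLt⟩ := rfl
  rcases lt_or_gt_of_ne hne with hlt | hgt
  · have h1 := chainDown (i - 1 - ((h : ℕ) + 1)) ((h : ℕ) + 1) (by omega)
    have h2 := down (h : ℕ) (by omega) hlt
    rw [heta]
    exact lt_of_le_of_lt h1 h2
  · have h1 := chainUp ((h : ℕ) - (i - 1) - 1) (by omega)
    rw [heta]
    have he : W ⟨i - 1 + ((h : ℕ) - (i - 1) - 1) + 1, by omega⟩ = W ⟨(h : ℕ), h.isLt⟩ :=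
      Weq _ _ (by omega) (by omega) (by omega)
    exact he ▸ h1
end

section
/- Fix a lozenge tiling S of the a×b×c hexagon, let H_+ be the set of full and partial hexagonal faces of the dual honeycomb region, and for each non-horizontal edge γ let f_γ ∈ ℤ^{H_+} be +1 on the face above γ, −1 on the face below γ, and 0 elsewhere. For each horizontal edge γ0 of S with NW, NE, SW, SE neighboring non-horizontal edges, f_{NW} + f_{SE} = f_{NE} + f_{SW}. Consequently the binomial relations B_{i,i+k−a−1}C_{i+k−a−1,k} + B_{i,i+k−a}C_{i+k−a,k} are homogeneous for the ℤ^{H_+}-grading assigning weight f_γ to the variable of edge γ. -/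
/-- fix a lozenge tiling `S` of the `a×b×c` hexagon and let `H` be the set
of (full and partial) hexagonal faces of the dual honeycomb region.  A horizontal edge
`γ0` of `S` has a face `P` above it, a face `Q` below it, and a face `W` (resp. `E`)
adjacent at its west (resp. east) endpoint; its four neighboring non-horizontal edges
are NW (separating `P` from `W`, with `P` above), NE (separating `P` from `E`, with `P`
above), SW (separating `W` from `Q`, with `W` above) and SE (separating `E` from `Q`,
with `E` above).  With `f_γ ∈ ℤ^{H}` equal to `+1` on the face above `γ`, `−1` on the
face below `γ`, and `0` elsewhere, the weights of the two monomials
`B_{i,i+k−a−1}C_{i+k−a−1,k}` (edges NW and SW) and `B_{i,i+k−a}C_{i+k−a,k}`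
(edges NE and SE) coincide: `f_{NW} + f_{SW} = f_{NE} + f_{SE}` (both equal
`e_P − e_Q`).  Consequently the binomial relation
`X_{NW}·X_{SW} + X_{NE}·X_{SE}` is homogeneous for the `ℤ^{H}`-grading assigning
weight `f_γ` to the variable of edge `γ`. -/
theorem horizontal_edge_grading_homogeneous {H : Type*} [DecidableEq H]
    (P Q W E : H) (fNW fNE fSW fSE : H → ℤ)
    (hNW : fNW = Pi.single P 1 - Pi.single W 1)
    (hNE : fNE = Pi.single P 1 - Pi.single E 1)
    (hSW : fSW = Pi.single W 1 - Pi.single Q 1)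
    (hSE : fSE = Pi.single E 1 - Pi.single Q 1) :
    fNW + fSW = fNE + fSE ∧
    MvPolynomial.IsWeightedHomogeneous
      (fun e : Fin 4 => if e = 0 then fNW else if e = 1 then fNE
        else if e = 2 then fSW else fSE)
      (MvPolynomial.X 0 * MvPolynomial.X 2 + MvPolynomial.X 1 * MvPolynomial.X 3 :
        MvPolynomial (Fin 4) ℤ)
      (Pi.single P 1 - Pi.single Q 1) := by
  subst hNW hNE hSW hSE
  constructor
  · abel
  · set w : Fin 4 → H → ℤ := (fun e => if e = 0 then Pi.single P 1 - Pi.single W 1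
      else if e = 1 then Pi.single P 1 - Pi.single E 1
      else if e = 2 then Pi.single W 1 - Pi.single Q 1
      else Pi.single E 1 - Pi.single Q (1:ℤ)) with hw
    have h1 : ((Pi.single P 1 - Pi.single Q 1 : H → ℤ)) = w 0 + w 2 := by
      simp [hw]
    have h2 : ((Pi.single P 1 - Pi.single Q 1 : H → ℤ)) = w 1 + w 3 := by
      simp [hw]
    apply MvPolynomial.IsWeightedHomogeneous.add
    · rw [h1]
      exact (MvPolynomial.isWeightedHomogeneous_X ℤ w 0).mul
        (MvPolynomial.isWeightedHomogeneous_X ℤ w 2)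
    · rw [h2]
      exact (MvPolynomial.isWeightedHomogeneous_X ℤ w 1).mul
        (MvPolynomial.isWeightedHomogeneous_X ℤ w 3)
end

section
/- Let Δ be a pure shellable simplicial complex with shelling order F_1,...,F_m of facets, A its Stanley–Reisner ring, r_i the product of the variables x_j with j ∈ F_i such that F_i \\ {j} is contained in F_1 ∪ ... ∪ F_{i−1}, and M_i = (r_i, r_{i+1}, ..., r_m) ⊆ A. Then for each i, M_i/M_{i+1} is a cyclic A-module generated by the image of r_i, and its annihilator is the prime ideal of the component of Spec A corresponding to the facet F_i (i.e., the ideal generated by the variables not in F_i). -/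
open MvPolynomial

set_option synthInstance.maxHeartbeats 800000
set_option maxHeartbeats 2000000

noncomputable def srsKill (V : Type*) [DecidableEq V] (kk : Type*) [CommRing kk] (S : Finset V) :
    MvPolynomial V kk →ₐ[kk] MvPolynomial {v // v ∈ S} kk :=
  aeval (fun v => if h : v ∈ S then X ⟨v, h⟩ else 0)

noncomputable def srsSec (V : Type*) (kk : Type*) [CommRing kk] (S : Finset V) :
    MvPolynomial {v // v ∈ S} kk →ₐ[kk] MvPolynomial V kk :=
  aeval (fun u => X (u : V))

lemma srs_sub_mem (V : Type*) [DecidableEq V] (kk : Type*) [CommRing kk] (S : Finset V)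
    (p : MvPolynomial V kk) :
    p - srsSec V kk S (srsKill V kk S p) ∈
      Ideal.span (X '' {v : V | v ∉ S} : Set (MvPolynomial V kk)) := by
  induction p using MvPolynomial.induction_on with
  | C a => simp [srsKill, srsSec]
  | add p q hp hq =>
      rw [map_add, map_add, add_sub_add_comm]
      exact Ideal.add_mem _ hp hq
  | mul_X p v hp =>
      rw [map_mul, map_mul]
      by_cases h : v ∈ S
      · have hX : srsSec V kk S (srsKill V kk S (X v)) = X v := by
          simp [srsKill, srsSec, h]
        rw [hX, ← sub_mul]
        exact Ideal.mul_mem_right _ _ hp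
      · have hX : srsKill V kk S (X v) = 0 := by
          simp only [srsKill, aeval_X]
          exact dif_neg h
        rw [hX, map_zero, mul_zero, sub_zero]
        exact Ideal.mul_mem_left _ _ (Ideal.subset_span ⟨v, h, rfl⟩)

lemma srs_ker (V : Type*) [DecidableEq V] (kk : Type*) [CommRing kk] (S : Finset V) :
    RingHom.ker (srsKill V kk S).toRingHom =
      Ideal.span (X '' {v : V | v ∉ S} : Set (MvPolynomial V kk)) := by
  apply le_antisymm
  · intro p hp
    have h0 : srsKill V kk S p = 0 := hp
    have := srs_sub_mem V kk S p
    rwa [h0, map_zero, sub_zero] at this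
  · rw [Ideal.span_le]
    rintro _ ⟨v, hv, rfl⟩
    have : srsKill V kk S (X v) = 0 := by
      simp only [srsKill, aeval_X]
      exact dif_neg hv
    exact this

section Comb

variable {V : Type*} [DecidableEq V] {m d1 : ℕ} {F : Fin m → Finset V}

lemma srs_keyA (hFinj : Function.Injective F) (hpure : ∀ i, (F i).card = d1)
    (hshell : ∀ i : Fin m, ∀ G ⊆ F i, (∃ j, j < i ∧ G ⊆ F j) →
      ∃ G', G ⊆ G' ∧ G' ⊆ F i ∧ G'.card = d1 - 1 ∧ ∃ j, j < i ∧ G' ⊆ F j)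
    (i : Fin m) (G : Finset V) (hGF : G ⊆ F i)
    (hex : ∃ j, j < i ∧ G ⊆ F j) :
    ¬ (F i).filter (fun v => ∃ j, j < i ∧ (F i).erase v ⊆ F j) ⊆ G := by
  intro hRG
  obtain ⟨j0, hj0, hGFj0⟩ := hex
  obtain ⟨G', hGG', hG'F, hcard, j, hj, hG'Fj⟩ := hshell i G hGF ⟨j0, hj0, hGFj0⟩
  have hne : G' ≠ F i := by
    intro h
    have hc := hcard
    rw [h, hpure i] at hc
    have hd0 : d1 = 0 := by omega
    have h1 : F i = ∅ := Finset.card_eq_zero.mp (by rw [hpure i, hd0])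
    have h2 : F j0 = ∅ := Finset.card_eq_zero.mp (by rw [hpure j0, hd0])
    exact absurd (hFinj (h1.trans h2.symm)) (ne_of_gt hj0)
  obtain ⟨v, hvF, hvG'⟩ := Finset.exists_of_ssubset (hG'F.ssubset_of_ne hne)
  have hG'eq : G' = (F i).erase v :=
    Finset.eq_of_subset_of_card_le (Finset.subset_erase.mpr ⟨hG'F, hvG'⟩)
      (by rw [Finset.card_erase_of_mem hvF, hpure i, hcard])
  have hvR : v ∈ (F i).filter (fun v => ∃ j, j < i ∧ (F i).erase v ⊆ F j) :=
    Finset.mem_filter.mpr ⟨hvF, j, hj, by rw [← hG'eq]; exact hG'Fj⟩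
  exact hvG' (hGG' (hRG hvR))

lemma srs_keyB (hFinj : Function.Injective F) (hpure : ∀ i, (F i).card = d1)
    (hshell : ∀ i : Fin m, ∀ G ⊆ F i, (∃ j, j < i ∧ G ⊆ F j) →
      ∃ G', G ⊆ G' ∧ G' ⊆ F i ∧ G'.card = d1 - 1 ∧ ∃ j, j < i ∧ G' ⊆ F j)
    (i k : Fin m) (hk : k < i)
    (h : (F i).filter (fun v => ∃ j, j < i ∧ (F i).erase v ⊆ F j) ⊆ F k) : False :=
  srs_keyA hFinj hpure hshell i _ (Finset.filter_subset _ _) ⟨k, hk, h⟩ le_rfl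

end Comb


/-- let `Δ` be a pure (all facets of cardinality `d1`) shellable
simplicial complex on a vertex set `V`, with shelling order `F 0, …, F (m-1)` of its
facets, `A = k[x_v]/I_Δ` its Stanley–Reisner ring, `r i` the product of the variables
`x_v` with `v ∈ F i` such that `F i \ {v}` is contained in an earlier facet, and
`M n = (r j : n ≤ j) ⊆ A`.  Then for each `i`, `M i / M (i+1)` is a cyclic `A`-module
generated by the image of `r i` (i.e. `M i = M (i+1) + (r i)`), and its annihilator
(the colon ideal `M (i+1) : (r i)`) is the prime ideal of the component of `Spec A`
corresponding to the facet `F i`, namely the ideal generated by the variables not in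
`F i`. -/
theorem stanley_reisner_shelling (V : Type*) [Fintype V] [DecidableEq V]
    (kk : Type*) [Field kk]
    (Δ : Finset (Finset V))
    (hdown : ∀ F ∈ Δ, ∀ G ⊆ F, G ∈ Δ)
    (m d1 : ℕ) (F : Fin m → Finset V)
    (hFinj : Function.Injective F)
    (hfacet : ∀ i, F i ∈ Δ ∧ ∀ G ∈ Δ, F i ⊆ G → G = F i)
    (hall : ∀ G ∈ Δ, ∃ i, G ⊆ F i)
    (hpure : ∀ i, (F i).card = d1)
    (hshell : ∀ i : Fin m, ∀ G ⊆ F i, (∃ j, j < i ∧ G ⊆ F j) →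
      ∃ G', G ⊆ G' ∧ G' ⊆ F i ∧ G'.card = d1 - 1 ∧ ∃ j, j < i ∧ G' ⊆ F j)
    (I : Ideal (MvPolynomial V kk))
    (hI : I = Ideal.span ((fun G : Finset V => ∏ v ∈ G, X v) '' {G | G ∉ Δ}))
    (r : Fin m → MvPolynomial V kk ⧸ I)
    (hr : ∀ i, r i = Ideal.Quotient.mk I
      (∏ v ∈ (F i).filter (fun v => ∃ j, j < i ∧ (F i).erase v ⊆ F j), X v))
    (M : ℕ → Ideal (MvPolynomial V kk ⧸ I))
    (hM : ∀ n, M n = Ideal.span {x | ∃ j : Fin m, n ≤ (j : ℕ) ∧ x = r j}) :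
    ∀ i : Fin m,
      M i = M ((i : ℕ) + 1) ⊔ Ideal.span {r i} ∧
      Submodule.colon (M ((i : ℕ) + 1)) (Ideal.span {r i})
        = Ideal.span ((fun v => Ideal.Quotient.mk I (X v)) '' {v | v ∉ F i}) ∧
      (Ideal.span ((fun v => Ideal.Quotient.mk I (X v)) '' {v | v ∉ F i})).IsPrime := by
  intro i
  set Rst : Fin m → Finset V :=
    fun j => (F j).filter (fun v => ∃ k, k < j ∧ (F j).erase v ⊆ F k) with hRst
  set ρ : Fin m → MvPolynomial V kk := fun j => ∏ v ∈ Rst j, X v with hρ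
  have hrρ : ∀ j, r j = Ideal.Quotient.mk I (ρ j) := fun j => hr j
  -- Part 1
  have part1 : M i = M ((i : ℕ) + 1) ⊔ Ideal.span {r i} := by
    rw [hM, hM, ← Ideal.span_union]
    congr 1
    ext x
    constructor
    · rintro ⟨j, hj, rfl⟩
      rcases eq_or_lt_of_le hj with h | h
      · right
        have : i = j := Fin.ext h
        rw [this]
        rfl
      · exact Or.inl ⟨j, h, rfl⟩
    · rintro (⟨j, hj, rfl⟩ | hx)
      · exact ⟨j, by omega, rfl⟩
      · exact ⟨i, le_rfl, hx⟩
  -- the prime ideal machinery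
  set φ := srsKill V kk (F i) with hφ
  have hIP : I ≤ Ideal.span (X '' {v : V | v ∉ F i} : Set (MvPolynomial V kk)) := by
    rw [hI, Ideal.span_le]
    rintro _ ⟨G, hG, rfl⟩
    have hGS : ¬ G ⊆ F i := fun h => hG (hdown (F i) (hfacet i).1 G h)
    obtain ⟨v, hvG, hvS⟩ := Finset.not_subset.mp hGS
    simp only
    rw [← Finset.mul_prod_erase G _ hvG]
    exact Ideal.mul_mem_right _ _ (Ideal.subset_span ⟨v, hvS, rfl⟩)
  have hPprime : (Ideal.span (X '' {v : V | v ∉ F i} : Set (MvPolynomial V kk))).IsPrime := by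
    rw [← srs_ker V kk (F i)]
    exact RingHom.ker_isPrime _
  have hQ : Ideal.span ((fun v => Ideal.Quotient.mk I (X v)) '' {v | v ∉ F i})
      = Ideal.map (Ideal.Quotient.mk I)
          (Ideal.span (X '' {v : V | v ∉ F i} : Set (MvPolynomial V kk))) := by
    rw [Ideal.map_span, Set.image_image]
  have part3 : (Ideal.span ((fun v => Ideal.Quotient.mk I (X v)) '' {v | v ∉ F i})).IsPrime := by
    rw [hQ]
    haveI := hPprime
    exact Ideal.map_isPrime_of_surjective Ideal.Quotient.mk_surjective
      (by rw [Ideal.mk_ker]; exact hIP)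
  -- M as map of polynomial ideal
  have hMmap : ∀ n, M n = Ideal.map (Ideal.Quotient.mk I)
      (Ideal.span {p | ∃ j : Fin m, n ≤ (j : ℕ) ∧ p = ρ j}) := by
    intro n
    rw [hM, Ideal.map_span]
    congr 1
    ext x
    constructor
    · rintro ⟨j, hj, rfl⟩
      exact ⟨ρ j, ⟨j, hj, rfl⟩, (hrρ j).symm⟩
    · rintro ⟨p, ⟨j, hj, rfl⟩, rfl⟩
      exact ⟨j, hj, (hrρ j).symm⟩
  have hφρ : ∀ j : Fin m, i < j → φ (ρ j) = 0 := by
    intro j hij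
    have hns : ¬ Rst j ⊆ F i := fun h => srs_keyB hFinj hpure hshell j i hij h
    obtain ⟨v, hvR, hvS⟩ := Finset.not_subset.mp hns
    rw [hρ]
    simp only [map_prod]
    refine Finset.prod_eq_zero hvR ?_
    rw [hφ]
    simp only [srsKill, aeval_X]
    exact dif_neg hvS
  have hφρi : φ (ρ i) ≠ 0 := by
    rw [hρ]
    simp only [map_prod]
    refine Finset.prod_ne_zero_iff.mpr ?_
    intro v hv
    have hvF : v ∈ F i := (Finset.mem_filter.mp hv).1
    rw [hφ]
    simp only [srsKill, aeval_X]
    rw [dif_pos hvF]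
    exact X_ne_zero _
  have hkerφ : RingHom.ker φ.toRingHom
      = Ideal.span (X '' {v : V | v ∉ F i} : Set (MvPolynomial V kk)) := srs_ker V kk (F i)
  -- lifting lemma : colon ≤ Q
  have hlift : ∀ a : MvPolynomial V kk,
      Ideal.Quotient.mk I a * r i ∈ M ((i : ℕ) + 1) →
      Ideal.Quotient.mk I a ∈
        Ideal.span ((fun v => Ideal.Quotient.mk I (X v)) '' {v | v ∉ F i}) := by
    intro a ha
    rw [hMmap, hrρ, ← map_mul] at ha
    obtain ⟨y, hy, hyeq⟩ :=
      (Ideal.mem_map_iff_of_surjective _ Ideal.Quotient.mk_surjective).mp ha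
    have hJ : φ y = 0 := by
      have hle : Ideal.span {p | ∃ j : Fin m, (i : ℕ) + 1 ≤ (j : ℕ) ∧ p = ρ j}
          ≤ RingHom.ker φ.toRingHom := by
        rw [Ideal.span_le]
        rintro _ ⟨j, hj, rfl⟩
        exact hφρ j (Fin.lt_def.mpr (by omega))
      exact hle hy
    have hdiff : φ (y - a * ρ i) = 0 := by
      have hle : I ≤ RingHom.ker φ.toRingHom := by rw [hkerφ]; exact hIP
      exact hle (Ideal.Quotient.eq.mp hyeq)
    rw [map_sub, hJ, zero_sub, neg_eq_zero, map_mul] at hdiff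
    have ha0 : φ a = 0 := by
      rcases mul_eq_zero.mp hdiff with h | h
      · exact h
      · exact absurd h hφρi
    have hmem : a ∈ Ideal.span (X '' {v : V | v ∉ F i} : Set (MvPolynomial V kk)) := by
      rw [← hkerφ]; exact ha0
    rw [hQ]
    exact Ideal.mem_map_of_mem _ hmem
  -- Part 2
  have part2 : Submodule.colon (M ((i : ℕ) + 1)) (Ideal.span {r i})
      = Ideal.span ((fun v => Ideal.Quotient.mk I (X v)) '' {v | v ∉ F i}) := by
    apply le_antisymm
    · intro x hx
      obtain ⟨a, rfl⟩ := Ideal.Quotient.mk_surjective x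
      exact hlift a (Ideal.mem_colon_span_singleton.mp hx)
    · rw [Ideal.span_le]
      rintro _ ⟨v, hv, rfl⟩
      rw [SetLike.mem_coe, Ideal.mem_colon_span_singleton, hrρ, ← map_mul]
      have hvF : v ∉ F i := hv
      have hvR : v ∉ Rst i := fun h => hvF (Finset.filter_subset _ _ h)
      have hprod : X v * ρ i = ∏ u ∈ insert v (Rst i), X u := (Finset.prod_insert hvR).symm
      by_cases hΔ : insert v (Rst i) ∈ Δ
      · obtain ⟨k0, hk0⟩ := hall _ hΔ
        obtain ⟨k, hk, hmin⟩ := Finset.exists_min_image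
          (Finset.univ.filter fun k : Fin m => insert v (Rst i) ⊆ F k) id
          ⟨k0, Finset.mem_filter.mpr ⟨Finset.mem_univ _, hk0⟩⟩
        have hkG : insert v (Rst i) ⊆ F k := (Finset.mem_filter.mp hk).2
        have hminG : ∀ j, j < k → ¬ insert v (Rst i) ⊆ F j := by
          intro j hj hGj
          have := hmin j (Finset.mem_filter.mpr ⟨Finset.mem_univ _, hGj⟩)
          simp only [id] at this
          exact absurd this (not_le.mpr hj)
        have hRk : Rst k ⊆ insert v (Rst i) := by
          by_contra hc
          obtain ⟨u, huR, huG⟩ := Finset.not_subset.mp hc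
          obtain ⟨huF, j, hj, hjer⟩ := Finset.mem_filter.mp huR
          exact hminG j hj ((Finset.subset_erase.mpr ⟨hkG, huG⟩).trans hjer)
        have hik : i < k := by
          rcases lt_trichotomy i k with h | h | h
          · exact h
          · exact absurd (hkG (Finset.mem_insert_self v _)) (h ▸ hvF)
          · exact absurd ((Finset.subset_insert v _).trans hkG)
              (fun hh => srs_keyB hFinj hpure hshell i k h hh)
        have hsplit : X v * ρ i = (∏ u ∈ insert v (Rst i) \ Rst k, X u) * ρ k := by
          rw [hprod, hρ]
          simp only
          rw [Finset.prod_sdiff hRk]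
        rw [hsplit, map_mul, ← hrρ]
        refine Ideal.mul_mem_left _ _ ?_
        rw [hM]
        exact Ideal.subset_span ⟨k, by have := Fin.lt_def.mp hik; omega, rfl⟩
      · have hmem : X v * ρ i ∈ I := by
          rw [hI, hprod]
          exact Ideal.subset_span ⟨insert v (Rst i), hΔ, rfl⟩
        rw [Ideal.Quotient.eq_zero_iff_mem.mpr hmem]
        exact (M _).zero_mem
  exact ⟨part1, part2, part3⟩
end

section
/- Let R be a polynomial ring with a term-order weighting, I ⊆ R an ideal, A = R/I, P an index set, M ≤ A^P an A-submodule with pullback M̃ ≤ R^P. Then any Gröbner basis of M̃ ≤ R^P descends to a generating set of the init(A)-module init(M) := init(A) ⊗_R init(M̃) inside init(A)^P, where init(A) = R/init(I). -/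
open MvPolynomial

set_option synthInstance.maxHeartbeats 1600000
set_option maxHeartbeats 3200000

noncomputable section

variable {k : Type*} [Field k] {σ : Type*} {P : Type*}

/-- The weight of a monomial, for the (partial) term order determined by weights
`wv` on the variables. -/
def wtMon (wv : σ → ℕ) (m : σ →₀ ℕ) : ℕ :=
  m.sum fun s e => e * wv s

/-- The minimal weight of the monomials of a polynomial (`⊤` for the zero
polynomial). -/
def minWt (wv : σ → ℕ) (f : MvPolynomial σ k) : ℕ∞ :=
  f.support.inf fun m => (wtMon wv m : ℕ∞)

/-- The initial form of a polynomial: the sum of its terms of minimal weight. -/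
def initPoly (wv : σ → ℕ) (f : MvPolynomial σ k) : MvPolynomial σ k :=
  ∑ m ∈ f.support.filter (fun m => (wtMon wv m : ℕ∞) = minWt wv f),
    monomial m (coeff m f)

/-- The initial ideal of an ideal: the ideal spanned by all initial forms. -/
def initIdeal (wv : σ → ℕ) (I : Ideal (MvPolynomial σ k)) : Ideal (MvPolynomial σ k) :=
  Ideal.span (initPoly wv '' (I : Set (MvPolynomial σ k)))

/-- The minimal weight of an element of the free module `R^P` (`P →₀ R`), where the
basis element at `p : P` is given the weight shift `shift p`. -/
def minWtVec (wv : σ → ℕ) (shift : P → ℕ) (v : P →₀ MvPolynomial σ k) : ℕ∞ :=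
  v.support.inf fun p => (shift p : ℕ∞) + minWt wv (v p)

/-- The initial form of an element of the free module `R^P`: the sum of its terms
(in each coordinate) of minimal total weight. -/
def initVec (wv : σ → ℕ) (shift : P → ℕ) (v : P →₀ MvPolynomial σ k) :
    P →₀ MvPolynomial σ k :=
  ∑ p ∈ v.support,
    Finsupp.single p
      (∑ m ∈ (v p).support.filter
          (fun m => ((shift p : ℕ∞) + (wtMon wv m : ℕ∞)) = minWtVec wv shift v),
        monomial m (coeff m (v p)))

/-- The initial submodule of a submodule of `R^P`: spanned by all initial forms. -/
def initSubmodule (wv : σ → ℕ) (shift : P → ℕ)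
    (Mt : Submodule (MvPolynomial σ k) (P →₀ MvPolynomial σ k)) :
    Submodule (MvPolynomial σ k) (P →₀ MvPolynomial σ k) :=
  Submodule.span (MvPolynomial σ k) (initVec wv shift '' (Mt : Set (P →₀ MvPolynomial σ k)))

lemma initVec_single (wv : σ → ℕ) (shift : P → ℕ) (p : P) (f : MvPolynomial σ k) :
    initVec wv shift (Finsupp.single p f) = Finsupp.single p (initPoly wv f) := by
  by_cases hf : f = 0
  · simp [hf, initVec, initPoly]
  · have hsupp : (Finsupp.single p f).support = {p} := Finsupp.support_single_ne_zero p hf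
    have hap : (Finsupp.single p f) p = f := Finsupp.single_eq_same
    have hmin : minWtVec wv shift (Finsupp.single p f) = (shift p : ℕ∞) + minWt wv f := by
      rw [minWtVec, hsupp, Finset.inf_singleton, hap]
    rw [initVec, hsupp, Finset.sum_singleton, hap, hmin]
    congr 1
    rw [initPoly]
    apply Finset.sum_congr _ (fun _ _ => rfl)
    apply Finset.filter_congr
    intro m hm
    constructor
    · intro h
      exact WithTop.add_left_cancel (WithTop.coe_ne_top) h
    · intro h; rw [h]

/-- let `R` be a polynomial ring with a term-order weighting (weights
`wv` on the variables and shifts `shift` on the basis of the free module `R^P`),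
`I ⊆ R` an ideal, `A = R/I`, `M ≤ A^P` an `A`-submodule with pullback `M̃ ≤ R^P`
(the preimage of `M` under the coordinatewise quotient map `R^P → A^P`).  Then any
Gröbner basis `G` of `M̃ ≤ R^P` (a subset of `M̃` whose initial forms span
`init(M̃)`) descends to a generating set of the `init(A)`-module
`init(M) = init(A) ⊗_R init(M̃)` inside `init(A)^P`, where `init(A) = R/init(I)`:
first, `init(I)·(R^P) ⊆ init(M̃)`, so that `R^P/init(M̃)`, and in particular
`init(M)` = the image of `init(M̃)` in `init(A)^P`, are `init(A)`-modules; and second,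
the images of the initial forms of the elements of `G` span that image. -/
theorem groebner_descends_to_initial (wv : σ → ℕ) (shift : P → ℕ)
    (I : Ideal (MvPolynomial σ k))
    (M : Submodule (MvPolynomial σ k ⧸ I) (P →₀ (MvPolynomial σ k ⧸ I)))
    (Mt : Submodule (MvPolynomial σ k) (P →₀ MvPolynomial σ k))
    (hMt : Mt = Submodule.comap
      (Finsupp.mapRange.linearMap (Submodule.mkQ (I : Submodule (MvPolynomial σ k)
        (MvPolynomial σ k))))
      (M.restrictScalars (MvPolynomial σ k)))
    (G : Set (P →₀ MvPolynomial σ k)) (hG : G ⊆ Mt)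
    (hGB : Submodule.span (MvPolynomial σ k) (initVec wv shift '' G)
      = initSubmodule wv shift Mt) :
    (∀ q ∈ initIdeal wv I, ∀ v : P →₀ MvPolynomial σ k,
        q • v ∈ initSubmodule wv shift Mt) ∧
    Submodule.map
        (Finsupp.mapRange.linearMap (Submodule.mkQ
          ((initIdeal wv I : Ideal (MvPolynomial σ k)) : Submodule (MvPolynomial σ k)
            (MvPolynomial σ k))))
        (initSubmodule wv shift Mt)
      = Submodule.span (MvPolynomial σ k)
          ((Finsupp.mapRange.linearMap (Submodule.mkQ
            ((initIdeal wv I : Ideal (MvPolynomial σ k)) : Submodule (MvPolynomial σ k)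
              (MvPolynomial σ k)))) '' (initVec wv shift '' G)) := by
  set R := MvPolynomial σ k
  set N := initSubmodule wv shift Mt with hN
  have key : ∀ f ∈ I, ∀ v : P →₀ R, initPoly wv f • v ∈ N := by
    intro f hf v
    have hS : v ∈ Submodule.comap ((LinearMap.lsmul R (P →₀ R)) (initPoly wv f)) N := by
      have htop : (⊤ : Submodule R (P →₀ R)) =
          Submodule.span R ((fun p => Finsupp.single p (1 : R)) '' Set.univ) := by
        rw [← Finsupp.supported_eq_span_single, Finsupp.supported_univ]
      have : (⊤ : Submodule R (P →₀ R)) ≤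
          Submodule.comap ((LinearMap.lsmul R (P →₀ R)) (initPoly wv f)) N := by
        rw [htop, Submodule.span_le]
        rintro _ ⟨p, -, rfl⟩
        simp only [Submodule.mem_comap, LinearMap.lsmul_apply, SetLike.mem_coe]
        have h1 : initPoly wv f • Finsupp.single p (1 : R)
            = initVec wv shift (Finsupp.single p f) := by
          rw [initVec_single, Finsupp.smul_single, smul_eq_mul, mul_one]
        rw [h1]
        apply Submodule.subset_span
        refine ⟨Finsupp.single p f, ?_, rfl⟩
        rw [hMt]
        simp only [SetLike.mem_coe, Submodule.mem_comap, Finsupp.mapRange.linearMap_apply,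
          Submodule.restrictScalars_mem]
        have : Finsupp.mapRange (⇑I.mkQ) (map_zero _) (Finsupp.single p f) = 0 := by
          rw [Finsupp.mapRange_single]
          have : I.mkQ f = 0 := by
            rwa [Submodule.mkQ_apply, Submodule.Quotient.mk_eq_zero]
          rw [this, Finsupp.single_zero]
        rw [this]
        exact Submodule.zero_mem _
      exact this trivial
    simpa using hS
  constructor
  · intro q hq v
    induction hq using Submodule.span_induction with
    | mem x hx =>
      obtain ⟨f, hf, rfl⟩ := hx
      exact key f hf v
    | zero => simp only [zero_smul]; exact N.zero_mem
    | add a b _ _ ha hb =>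
      rw [add_smul]
      exact N.add_mem ha hb
    | smul r a _ ha =>
      rw [smul_eq_mul, mul_smul]
      exact N.smul_mem r ha
  · rw [← hGB, Submodule.map_span]


end
end
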